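/- (Poisson commutativity of the Gelfand–Zeitlin system, Guillemin–Sternberg) Fix a positive integer n. Let K be an n×n complex Hermitian matrix such that for every 1 ≤ k ≤ n the principal submatrix K^{(k)} has k distinct eigenvalues. Then for all 1 ≤ i ≤ k ≤ n and 1 ≤ j ≤ m ≤ n, the functions f = l^k_i and g = l^m_j (where l^k_i(X) = l_i(X^{(k)}) on the real vector space of n×n Hermitian matrices) are differentiable at K, and their Kirillov–Kostant–Souriau Poisson bracket vanishes at K: Im Tr( K · [∇f(K), ∇g(K)] ) = 0, where [·,·] is the matrix commutator. -/

import Mathlib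

open Matrix

/-- The eigenvalues of a Hermitian matrix, listed in decreasing order:
`eigsDesc hA 0 = λ₁ ≥ eigsDesc hA 1 = λ₂ ≥ …`. -/
noncomputable def eigsDesc {n : ℕ} {A : Matrix (Fin n) (Fin n) ℂ} (hA : A.IsHermitian) :
    Fin n → ℝ :=
  fun i => hA.eigenvalues (Tuple.sort hA.eigenvalues i.rev)
/-- `lMap hA i = λ₁ + … + λ_{i+1}`, the partial sums of the decreasingly ordered
eigenvalues of a Hermitian matrix (`i : Fin n` represents the index `i+1`). -/
noncomputable def lMap {n : ℕ} {A : Matrix (Fin n) (Fin n) ℂ} (hA : A.IsHermitian) :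
    Fin n → ℝ :=
  fun i => ∑ j ∈ Finset.Iic i, eigsDesc hA j

open scoped Classical in
/-- The Gelfand–Zeitlin function `lᵏᵢ(X) = lᵢ(X^{(k)})`, defined (as a total function
on matrices) whenever `1 ≤ i ≤ k ≤ n` and the principal submatrix `X^{(k)}` is
Hermitian, and `0` otherwise. -/
noncomputable def lki {n : ℕ} (k i : ℕ) (X : Matrix (Fin n) (Fin n) ℂ) : ℝ :=
  if h : 1 ≤ i ∧ i ≤ k ∧ k ≤ n then
    if hX : (X.submatrix (Fin.castLE h.2.2) (Fin.castLE h.2.2)).IsHermitian then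
      lMap hX ⟨i - 1, by omega⟩
    else 0
  else 0

/-- `G` is the gradient of `f` at the Hermitian matrix `K`, in the sense of the
Kirillov–Kostant–Souriau formalism: `G` is Hermitian and for every Hermitian
direction `X`, `(d/dt)|₀ f(K + tX) = Re Tr(G·X)`. -/
def IsHermGradientAt {n : ℕ} (f : Matrix (Fin n) (Fin n) ℂ → ℝ)
    (K G : Matrix (Fin n) (Fin n) ℂ) : Prop :=
  G.IsHermitian ∧
  ∀ X : Matrix (Fin n) (Fin n) ℂ, X.IsHermitian →
    HasDerivAt (fun t : ℝ => f (K + t • X)) ((G * X).trace.re) 0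

section Helpers

variable {n k : ℕ}

lemma sum_castLE {M : Type*} [AddCommMonoid M] (h : k ≤ n) (f : Fin n → M)
    (hf : ∀ a : Fin n, k ≤ (a : ℕ) → f a = 0) :
    ∑ a, f a = ∑ a : Fin k, f (Fin.castLE h a) := by
  classical
  have hsub : (Finset.univ.map (Fin.castLEEmb h)) ⊆ Finset.univ := Finset.subset_univ _
  have h2 : ∑ a ∈ Finset.univ.map (Fin.castLEEmb h), f a = ∑ a : Fin k, f (Fin.castLE h a) := by
    rw [Finset.sum_map]; rfl
  rw [← h2]
  refine (Finset.sum_subset hsub ?_).symm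
  intro a _ ha
  refine hf a ?_
  by_contra hlt
  push_neg at hlt
  exact ha (Finset.mem_map.2 ⟨⟨a, hlt⟩, Finset.mem_univ _, rfl⟩)

/-- Embed a `k × k` matrix into the top-left corner of an `n × n` matrix. -/
noncomputable def padM (k : ℕ) (h : k ≤ n) (P : Matrix (Fin k) (Fin k) ℂ) :
    Matrix (Fin n) (Fin n) ℂ :=
  Matrix.of fun a b =>
    if ha : (a : ℕ) < k then if hb : (b : ℕ) < k then P ⟨a, ha⟩ ⟨b, hb⟩ else 0 else 0

lemma padM_apply_lt (h : k ≤ n) (P : Matrix (Fin k) (Fin k) ℂ) (a b : Fin k) :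
    padM k h P (Fin.castLE h a) (Fin.castLE h b) = P a b := by
  simp [padM, a.isLt, b.isLt]

lemma padM_apply_zero_left (h : k ≤ n) (P : Matrix (Fin k) (Fin k) ℂ) (a b : Fin n)
    (ha : k ≤ (a : ℕ)) : padM k h P a b = 0 := by
  simp [padM, Nat.not_lt.2 ha]

lemma padM_apply_zero_right (h : k ≤ n) (P : Matrix (Fin k) (Fin k) ℂ) (a b : Fin n)
    (hb : k ≤ (b : ℕ)) : padM k h P a b = 0 := by
  simp only [padM, of_apply]
  split_ifs with h1 h2
  · omega
  · rfl
  · rfl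

lemma padM_isHermitian (h : k ≤ n) {P : Matrix (Fin k) (Fin k) ℂ} (hP : P.IsHermitian) :
    (padM k h P).IsHermitian := by
  refine Matrix.IsHermitian.ext fun a b => ?_
  by_cases ha : (a : ℕ) < k
  · by_cases hb : (b : ℕ) < k
    · simp only [padM, of_apply, ha, hb, dif_pos]
      exact hP.apply ⟨a, ha⟩ ⟨b, hb⟩
    · rw [padM_apply_zero_right h P a b (Nat.le_of_not_lt hb),
        padM_apply_zero_left h P b a (Nat.le_of_not_lt hb)]
      simp
  · rw [padM_apply_zero_left h P a b (Nat.le_of_not_lt ha),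
      padM_apply_zero_right h P b a (Nat.le_of_not_lt ha)]
    simp

lemma trace_padM_mul (h : k ≤ n) (P : Matrix (Fin k) (Fin k) ℂ)
    (X : Matrix (Fin n) (Fin n) ℂ) :
    (padM k h P * X).trace =
      (P * X.submatrix (Fin.castLE h) (Fin.castLE h)).trace := by
  classical
  simp only [Matrix.trace, Matrix.diag, Matrix.mul_apply, Matrix.submatrix_apply]
  rw [sum_castLE h (fun a => ∑ b, padM k h P a b * X b a)
    (fun a ha => by
      refine Finset.sum_eq_zero fun b _ => ?_
      rw [padM_apply_zero_left h P a b ha, zero_mul])]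
  refine Finset.sum_congr rfl fun a _ => ?_
  rw [sum_castLE h (fun b => padM k h P (Fin.castLE h a) b * X b (Fin.castLE h a))
    (fun b hb => by show padM k h P (Fin.castLE h a) b * X b (Fin.castLE h a) = 0; rw [padM_apply_zero_right h P _ b hb, zero_mul])]
  refine Finset.sum_congr rfl fun b _ => ?_
  rw [padM_apply_lt]

lemma padM_mul_padM (h : k ≤ n) (P Q : Matrix (Fin k) (Fin k) ℂ) :
    padM k h P * padM k h Q = padM k h (P * Q) := by
  classical
  ext a b
  by_cases ha : (a : ℕ) < k
  · by_cases hb : (b : ℕ) < k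
    · have ha' : a = Fin.castLE h ⟨a, ha⟩ := by ext; rfl
      have hb' : b = Fin.castLE h ⟨b, hb⟩ := by ext; rfl
      rw [ha', hb', padM_apply_lt, Matrix.mul_apply, Matrix.mul_apply]
      rw [sum_castLE h (fun c => padM k h P (Fin.castLE h ⟨a, ha⟩) c *
          padM k h Q c (Fin.castLE h ⟨b, hb⟩))
        (fun c hc => by show padM k h P (Fin.castLE h ⟨a, ha⟩) c * padM k h Q c (Fin.castLE h ⟨b, hb⟩) = 0; rw [padM_apply_zero_right h P _ c hc, zero_mul])]
      refine Finset.sum_congr rfl fun c _ => ?_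
      rw [padM_apply_lt, padM_apply_lt]
    · rw [Matrix.mul_apply, padM_apply_zero_right h _ a b (Nat.le_of_not_lt hb)]
      refine Finset.sum_eq_zero fun c _ => ?_
      rw [padM_apply_zero_right h Q c b (Nat.le_of_not_lt hb), mul_zero]
  · rw [Matrix.mul_apply, padM_apply_zero_left h _ a b (Nat.le_of_not_lt ha)]
    refine Finset.sum_eq_zero fun c _ => ?_
    rw [padM_apply_zero_left h P a c (Nat.le_of_not_lt ha), zero_mul]

lemma padM_padM {m : ℕ} (hkm : k ≤ m) (hmn : m ≤ n) (P : Matrix (Fin k) (Fin k) ℂ) :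
    padM m hmn (padM k hkm P) = padM k (hkm.trans hmn) P := by
  ext a b
  simp only [padM, of_apply]
  split_ifs <;> first | rfl | omega

end Helpers


section Part2

variable {N : ℕ}

/-- Total version of `eigsDesc`. -/
noncomputable def eigsDescH (A : Matrix (Fin N) (Fin N) ℂ) (r : Fin N) : ℝ :=
  if h : A.IsHermitian then eigsDesc h r else 0

lemma eigsDescH_of_isHermitian {A : Matrix (Fin N) (Fin N) ℂ} (h : A.IsHermitian) (r : Fin N) :
    eigsDescH A r = eigsDesc h r := dif_pos h

lemma hermGradientAt_unique {f : Matrix (Fin N) (Fin N) ℂ → ℝ}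
    {K G G' : Matrix (Fin N) (Fin N) ℂ}
    (h : IsHermGradientAt f K G) (h' : IsHermGradientAt f K G') : G = G' := by
  classical
  have key : ∀ X : Matrix (Fin N) (Fin N) ℂ, X.IsHermitian →
      ((G * X).trace).re = ((G' * X).trace).re := fun X hX =>
    (h.2 X hX).unique (h'.2 X hX)
  have hH : (G - G').IsHermitian := h.1.sub h'.1
  have hzero : (((G - G') * (G - G')).trace).re = 0 := by
    have := key (G - G') hH
    rw [Matrix.sub_mul, Matrix.trace_sub, Complex.sub_re] at *
    linarith
  have htr : (((G - G') * (G - G')).trace).re =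
      ∑ a, ∑ b, Complex.normSq ((G - G') a b) := by
    rw [Matrix.trace, Complex.re_sum]
    refine Finset.sum_congr rfl fun a _ => ?_
    rw [Matrix.diag_apply, Matrix.mul_apply, Complex.re_sum]
    refine Finset.sum_congr rfl fun b _ => ?_
    have hba : (G - G') b a = star ((G - G') a b) := by
      conv_lhs => rw [← hH]
      simp [Matrix.conjTranspose_apply]
    rw [hba, RCLike.star_def, Complex.mul_conj]
    simp
  rw [htr] at hzero
  have : ∀ a ∈ (Finset.univ : Finset (Fin N)), ∀ b ∈ (Finset.univ : Finset (Fin N)),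
      Complex.normSq ((G - G') a b) = 0 := by
    intro a _ b _
    have h1 : ∀ a ∈ (Finset.univ : Finset (Fin N)),
        0 ≤ ∑ b, Complex.normSq ((G - G') a b) :=
      fun a _ => Finset.sum_nonneg fun b _ => Complex.normSq_nonneg _
    have h2 := (Finset.sum_eq_zero_iff_of_nonneg h1).1 hzero a (Finset.mem_univ a)
    have h3 := (Finset.sum_eq_zero_iff_of_nonneg
      (fun b _ => Complex.normSq_nonneg ((G - G') a b))).1 h2 b (Finset.mem_univ b)
    exact h3
  have : G - G' = 0 := by
    ext a b
    have := this a (Finset.mem_univ a) b (Finset.mem_univ b)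
    simpa [Complex.normSq_eq_zero] using this
  exact sub_eq_zero.1 this
end Part2


section Part3
variable {N : ℕ}

lemma strictMono_eq_of_mem_image {f g : Fin N → ℝ} (hf : StrictMono f) (hg : StrictMono g)
    (himg : ∀ r, f r ∈ Finset.image g Finset.univ) : f = g := by
  classical
  have hcard : (Finset.image g Finset.univ).card = N := by
    rw [Finset.card_image_of_injective _ hg.injective, Finset.card_univ, Fintype.card_fin]
  have h1 : f = ⇑((Finset.image g Finset.univ).orderEmbOfFin hcard) :=
    Finset.orderEmbOfFin_unique hcard himg hf
  have h2 : g = ⇑((Finset.image g Finset.univ).orderEmbOfFin hcard) :=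
    Finset.orderEmbOfFin_unique hcard
      (fun x => Finset.mem_image_of_mem g (Finset.mem_univ x)) hg
  rw [h1, ← h2]

lemma eigsDesc_eq_of_strictMono {A' : Matrix (Fin N) (Fin N) ℂ} (hA' : A'.IsHermitian)
    {φ : Fin N → ℝ} (hφ : StrictMono φ)
    (hroots : ∀ q : Fin N, ∃ s, hA'.eigenvalues s = φ q) (r : Fin N) :
    eigsDesc hA' r = φ r.rev := by
  classical
  set lam := hA'.eigenvalues with hlam
  set g : Fin N → ℝ := lam ∘ ⇑(Tuple.sort lam) with hg
  have hgmono : Monotone g := Tuple.monotone_sort lam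
  have himg_g : Finset.image g Finset.univ = Finset.image lam Finset.univ := by
    rw [hg]
    rw [← Finset.image_image]
    congr 1
    exact Finset.image_univ_equiv (Tuple.sort lam)
  have hsub : Finset.image φ Finset.univ ⊆ Finset.image lam Finset.univ := by
    intro x hx
    obtain ⟨q, _, rfl⟩ := Finset.mem_image.1 hx
    obtain ⟨s, hs⟩ := hroots q
    exact Finset.mem_image.2 ⟨s, Finset.mem_univ s, hs⟩
  have hcardφ : (Finset.image φ Finset.univ).card = N := by
    rw [Finset.card_image_of_injective _ hφ.injective, Finset.card_univ, Fintype.card_fin]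
  have hcardlam : (Finset.image lam Finset.univ).card ≤ N := by
    calc (Finset.image lam Finset.univ).card ≤ Finset.univ.card := Finset.card_image_le
    _ = N := by simp
  have heq : Finset.image φ Finset.univ = Finset.image lam Finset.univ :=
    Finset.eq_of_subset_of_card_le hsub (by omega)
  have hginj : Function.Injective g := by
    have : Set.InjOn g ↑(Finset.univ : Finset (Fin N)) := by
      apply Finset.card_image_iff.1
      rw [himg_g, ← heq, hcardφ, Finset.card_univ, Fintype.card_fin]
    intro a b hab
    exact this (Finset.mem_coe.2 (Finset.mem_univ a)) (Finset.mem_coe.2 (Finset.mem_univ b)) hab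
  have hgs : StrictMono g := hgmono.strictMono_of_injective hginj
  have : g = φ := by
    refine strictMono_eq_of_mem_image hgs hφ fun q => ?_
    rw [heq, ← himg_g]
    exact Finset.mem_image_of_mem g (Finset.mem_univ q)
  show g r.rev = φ r.rev
  rw [this]

end Part3


section Part4
variable {N : ℕ} {A : Matrix (Fin N) (Fin N) ℂ} (hA : A.IsHermitian)

/-- The rank-one spectral projection onto the `s`-th eigenvector. -/
noncomputable def eigsProj (s : Fin N) : Matrix (Fin N) (Fin N) ℂ :=
  (hA.eigenvectorUnitary : Matrix (Fin N) (Fin N) ℂ) * Matrix.diagonal (Pi.single s 1) *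
    star (hA.eigenvectorUnitary : Matrix (Fin N) (Fin N) ℂ)

lemma unitary_mul_star :
    (hA.eigenvectorUnitary : Matrix (Fin N) (Fin N) ℂ) *
      star (hA.eigenvectorUnitary : Matrix (Fin N) (Fin N) ℂ) = 1 :=
  Unitary.mul_star_self_of_mem hA.eigenvectorUnitary.2

lemma star_mul_unitary :
    star (hA.eigenvectorUnitary : Matrix (Fin N) (Fin N) ℂ) *
      (hA.eigenvectorUnitary : Matrix (Fin N) (Fin N) ℂ) = 1 :=
  Unitary.star_mul_self_of_mem hA.eigenvectorUnitary.2

lemma conj_diag_mul (v w : Fin N → ℂ) :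
    ((hA.eigenvectorUnitary : Matrix (Fin N) (Fin N) ℂ) * Matrix.diagonal v *
        star (hA.eigenvectorUnitary : Matrix (Fin N) (Fin N) ℂ)) *
      ((hA.eigenvectorUnitary : Matrix (Fin N) (Fin N) ℂ) * Matrix.diagonal w *
        star (hA.eigenvectorUnitary : Matrix (Fin N) (Fin N) ℂ)) =
    (hA.eigenvectorUnitary : Matrix (Fin N) (Fin N) ℂ) * Matrix.diagonal (fun i => v i * w i) *
      star (hA.eigenvectorUnitary : Matrix (Fin N) (Fin N) ℂ) := by
  set U : Matrix (Fin N) (Fin N) ℂ := (hA.eigenvectorUnitary : Matrix (Fin N) (Fin N) ℂ)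
  calc (U * Matrix.diagonal v * star U) * (U * Matrix.diagonal w * star U)
      = U * Matrix.diagonal v * (star U * U) * (Matrix.diagonal w * star U) := by
        simp only [Matrix.mul_assoc]
  _ = U * (Matrix.diagonal v * Matrix.diagonal w) * star U := by
        rw [star_mul_unitary hA, Matrix.mul_one]; simp only [Matrix.mul_assoc]
  _ = _ := by rw [Matrix.diagonal_mul_diagonal]

lemma conj_diag_comm (v w : Fin N → ℂ) :
    ((hA.eigenvectorUnitary : Matrix (Fin N) (Fin N) ℂ) * Matrix.diagonal v *
        star (hA.eigenvectorUnitary : Matrix (Fin N) (Fin N) ℂ)) *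
      ((hA.eigenvectorUnitary : Matrix (Fin N) (Fin N) ℂ) * Matrix.diagonal w *
        star (hA.eigenvectorUnitary : Matrix (Fin N) (Fin N) ℂ)) =
    ((hA.eigenvectorUnitary : Matrix (Fin N) (Fin N) ℂ) * Matrix.diagonal w *
        star (hA.eigenvectorUnitary : Matrix (Fin N) (Fin N) ℂ)) *
      ((hA.eigenvectorUnitary : Matrix (Fin N) (Fin N) ℂ) * Matrix.diagonal v *
        star (hA.eigenvectorUnitary : Matrix (Fin N) (Fin N) ℂ)) := by
  rw [conj_diag_mul hA, conj_diag_mul hA]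
  have h : (fun i => v i * w i) = fun i => w i * v i := funext fun i => mul_comm _ _
  rw [h]

lemma sub_smul_one_eq (x : ℝ) :
    A - (x : ℂ) • 1 =
      (hA.eigenvectorUnitary : Matrix (Fin N) (Fin N) ℂ) *
        Matrix.diagonal (fun s => (hA.eigenvalues s : ℂ) - x) *
        star (hA.eigenvectorUnitary : Matrix (Fin N) (Fin N) ℂ) := by
  have hD : Matrix.diagonal (fun s => (hA.eigenvalues s : ℂ) - x) =
      Matrix.diagonal (RCLike.ofReal ∘ hA.eigenvalues) - (x : ℂ) • 1 := by
    ext a b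
    by_cases hab : a = b
    · subst hab; simp [Matrix.diagonal_apply, Matrix.one_apply]
    · simp [Matrix.diagonal_apply, Matrix.one_apply, hab]
  rw [hD, Matrix.mul_sub, Matrix.sub_mul]
  have hx : (hA.eigenvectorUnitary : Matrix (Fin N) (Fin N) ℂ) * ((x : ℂ) • 1) *
      star (hA.eigenvectorUnitary : Matrix (Fin N) (Fin N) ℂ) = (x : ℂ) • 1 := by
    rw [Matrix.mul_smul, Matrix.mul_one, Matrix.smul_mul, unitary_mul_star hA]
  have hs := hA.spectral_theorem
  simp only [Unitary.conjStarAlgAut_apply, Unitary.coe_star] at hs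
  rw [hx, ← hs]

lemma det_sub_smul_one (x : ℝ) :
    (A - (x : ℂ) • 1).det = ∏ s, ((hA.eigenvalues s : ℂ) - x) := by
  rw [sub_smul_one_eq hA x, Matrix.det_mul, Matrix.det_mul]
  have h1 : (hA.eigenvectorUnitary : Matrix (Fin N) (Fin N) ℂ).det *
      (star (hA.eigenvectorUnitary : Matrix (Fin N) (Fin N) ℂ)).det = 1 := by
    rw [← Matrix.det_mul, unitary_mul_star hA, Matrix.det_one]
  calc (hA.eigenvectorUnitary : Matrix (Fin N) (Fin N) ℂ).det *
      (Matrix.diagonal fun s => (hA.eigenvalues s : ℂ) - x).det *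
      (star (hA.eigenvectorUnitary : Matrix (Fin N) (Fin N) ℂ)).det
      = ((hA.eigenvectorUnitary : Matrix (Fin N) (Fin N) ℂ).det *
        (star (hA.eigenvectorUnitary : Matrix (Fin N) (Fin N) ℂ)).det) *
        (Matrix.diagonal fun s => (hA.eigenvalues s : ℂ) - x).det := by ring
  _ = (Matrix.diagonal fun s => (hA.eigenvalues s : ℂ) - x).det := by rw [h1, one_mul]
  _ = _ := by rw [Matrix.det_diagonal]

lemma re_det_sub_smul_one (x : ℝ) :
    ((A - (x : ℂ) • 1).det).re = ∏ s, (hA.eigenvalues s - x) := by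
  rw [det_sub_smul_one hA x]
  have : ∏ s, ((hA.eigenvalues s : ℂ) - x) = ((∏ s, (hA.eigenvalues s - x) : ℝ) : ℂ) := by
    push_cast; rfl
  rw [this, Complex.ofReal_re]

lemma star_single (s : Fin N) : (star (Pi.single s 1) : Fin N → ℂ) = Pi.single s 1 := by
  funext a
  rcases eq_or_ne a s with rfl | ha <;> simp [Pi.single_apply, *]

lemma eigsProj_isHermitian (s : Fin N) : (eigsProj hA s).IsHermitian := by
  unfold eigsProj Matrix.IsHermitian
  simp [Matrix.conjTranspose_mul, Matrix.diagonal_conjTranspose, star_single,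
    Matrix.mul_assoc, Matrix.star_eq_conjTranspose]

lemma eigsProj_commute (s : Fin N) : A * eigsProj hA s = eigsProj hA s * A := by
  have hsp := hA.spectral_theorem
  have h1 := congrArg (fun M => M * eigsProj hA s) hsp
  have h2 := congrArg (fun M => eigsProj hA s * M) hsp
  simp only [Unitary.conjStarAlgAut_apply, Unitary.coe_star] at h1 h2
  rw [h1, h2]
  exact conj_diag_comm hA _ _

lemma vec_erase_prod (s0 : Fin N) :
    (fun i => ∏ j ∈ Finset.univ.erase i,
        ((hA.eigenvalues j : ℂ) - (hA.eigenvalues s0 : ℝ))) =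
      (∏ s ∈ Finset.univ.erase s0, ((hA.eigenvalues s : ℂ) - (hA.eigenvalues s0 : ℝ))) •
        (Pi.single s0 1 : Fin N → ℂ) := by
  funext i
  by_cases hi : i = s0
  · subst hi; simp
  · have hmem : s0 ∈ Finset.univ.erase i := Finset.mem_erase.2 ⟨Ne.symm hi, Finset.mem_univ _⟩
    rw [Finset.prod_eq_zero hmem (by simp)]
    rw [Pi.smul_apply, Pi.single_apply, if_neg hi, smul_zero]

lemma adjugate_sub_smul_one (s0 : Fin N) :
    (A - ((hA.eigenvalues s0 : ℝ) : ℂ) • 1).adjugate =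
      (∏ s ∈ Finset.univ.erase s0, ((hA.eigenvalues s : ℂ) - (hA.eigenvalues s0 : ℝ))) •
        eigsProj hA s0 := by
  set U : Matrix (Fin N) (Fin N) ℂ := (hA.eigenvectorUnitary : Matrix (Fin N) (Fin N) ℂ)
  have hU1 : U * star U = 1 := unitary_mul_star hA
  have hU2 : star U * U = 1 := star_mul_unitary hA
  have hdetU : (star U).det * U.det = 1 := by rw [← Matrix.det_mul, hU2, Matrix.det_one]
  have hadjU : U.adjugate = U.det • star U := by
    have h := Matrix.mul_adjugate U
    calc U.adjugate = 1 * U.adjugate := (one_mul _).symm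
    _ = star U * U * U.adjugate := by rw [hU2]
    _ = star U * (U * U.adjugate) := by rw [Matrix.mul_assoc]
    _ = star U * (U.det • 1) := by rw [h]
    _ = U.det • star U := by rw [Matrix.mul_smul, Matrix.mul_one]
  have hadjsU : (star U).adjugate = (star U).det • U := by
    have h := Matrix.mul_adjugate (star U)
    calc (star U).adjugate = 1 * (star U).adjugate := (one_mul _).symm
    _ = U * star U * (star U).adjugate := by rw [hU1]
    _ = U * (star U * (star U).adjugate) := by rw [Matrix.mul_assoc]
    _ = U * ((star U).det • 1) := by rw [h]
    _ = (star U).det • U := by rw [Matrix.mul_smul, Matrix.mul_one]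
  rw [sub_smul_one_eq hA (hA.eigenvalues s0)]
  rw [Matrix.adjugate_mul_distrib, Matrix.adjugate_mul_distrib]
  rw [Matrix.adjugate_diagonal, hadjU, hadjsU]
  rw [vec_erase_prod hA s0, Matrix.diagonal_smul]
  set c : ℂ := ∏ s ∈ Finset.univ.erase s0, ((hA.eigenvalues s : ℂ) - (hA.eigenvalues s0 : ℝ))
  unfold eigsProj
  simp only [Matrix.smul_mul, Matrix.mul_smul, smul_smul]
  rw [show U.det * c * (star U).det = ((star U).det * U.det) * c from by ring, hdetU, one_mul]
  simp only [Matrix.mul_assoc]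
  rfl

end Part4


section Part5
variable {N : ℕ}

lemma hasDerivAt_det_line (M B : Matrix (Fin N) (Fin N) ℂ) :
    HasDerivAt (fun t : ℝ => (M + t • B).det) ((M.adjugate * B).trace) 0 := by
  classical
  have hfun : (fun t : ℝ => (M + t • B).det)
      = fun t => ∑ σ : Equiv.Perm (Fin N), ((Equiv.Perm.sign σ : ℤ) : ℂ) *
          ∏ i, (M (σ i) i + t • B (σ i) i) := by
    funext t
    rw [Matrix.det_apply']
    refine Finset.sum_congr rfl fun σ _ => ?_
    congr 1
  rw [hfun]
  have key : ∀ σ : Equiv.Perm (Fin N),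
      HasDerivAt (fun t : ℝ => ∏ i, (M (σ i) i + t • B (σ i) i))
        (∑ i, (∏ j ∈ Finset.univ.erase i, M (σ j) j) • B (σ i) i) 0 := by
    intro σ
    have h := HasDerivAt.fun_finsetProd (u := Finset.univ)
      (f := fun i t => M (σ i) i + t • B (σ i) i) (f' := fun i => B (σ i) i) (x := (0:ℝ))
      (fun i _ => by
        simpa using ((hasDerivAt_id (0:ℝ)).smul_const (B (σ i) i)).const_add (M (σ i) i))
    simpa using h
  have total := HasDerivAt.fun_sum (u := Finset.univ)
    (A := fun σ t => ((Equiv.Perm.sign σ : ℤ) : ℂ) * ∏ i, (M (σ i) i + t • B (σ i) i))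
    (A' := fun σ => ((Equiv.Perm.sign σ : ℤ) : ℂ) *
       ∑ i, (∏ j ∈ Finset.univ.erase i, M (σ j) j) • B (σ i) i)
    (fun σ _ => (key σ).const_mul _)
  have hid : (M.adjugate * B).trace = ∑ σ : Equiv.Perm (Fin N),
      ((Equiv.Perm.sign σ : ℤ) : ℂ) *
      ∑ i, (∏ j ∈ Finset.univ.erase i, M (σ j) j) • B (σ i) i := by
    have h1 : (M.adjugate * B).trace = ∑ i, (M.cramer fun r => B r i) i := by
      simp only [Matrix.trace, Matrix.diag_apply, Matrix.mul_apply,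
        Matrix.cramer_eq_adjugate_mulVec, Matrix.mulVec, dotProduct]
    have h2 : ∀ i, (M.cramer fun r => B r i) i =
        ∑ σ : Equiv.Perm (Fin N), ((Equiv.Perm.sign σ : ℤ) : ℂ) *
          (B (σ i) i * ∏ j ∈ Finset.univ.erase i, M (σ j) j) := by
      intro i
      rw [Matrix.cramer_apply, Matrix.det_apply']
      refine Finset.sum_congr rfl fun σ _ => ?_
      congr 1
      rw [← Finset.mul_prod_erase Finset.univ _ (Finset.mem_univ i)]
      congr 1
      · simp [Matrix.updateCol_apply]
      · refine Finset.prod_congr rfl fun j hj => ?_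
        rw [Matrix.updateCol_apply, if_neg (Finset.mem_erase.1 hj).1]
    rw [h1]
    calc ∑ i, (M.cramer fun r => B r i) i
        = ∑ i, ∑ σ : Equiv.Perm (Fin N), ((Equiv.Perm.sign σ : ℤ) : ℂ) *
          (B (σ i) i * ∏ j ∈ Finset.univ.erase i, M (σ j) j) :=
          Finset.sum_congr rfl fun i _ => h2 i
    _ = ∑ σ : Equiv.Perm (Fin N), ∑ i, ((Equiv.Perm.sign σ : ℤ) : ℂ) *
          (B (σ i) i * ∏ j ∈ Finset.univ.erase i, M (σ j) j) := Finset.sum_comm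
    _ = _ := by
        refine Finset.sum_congr rfl fun σ _ => ?_
        rw [Finset.mul_sum]
        refine Finset.sum_congr rfl fun i _ => ?_
        rw [smul_eq_mul]
        ring
  rw [hid]
  exact total

end Part5


section Part6
open ComplexOrder in
lemma coe_smul_mat {N : ℕ} (x : ℝ) (M : Matrix (Fin N) (Fin N) ℂ) :
    (x : ℂ) • M = x • M := by
  ext a b
  simp [Matrix.smul_apply, Complex.real_smul]

lemma L_decomp (L : ℝ × ℝ →L[ℝ] ℝ) (p : ℝ × ℝ) :
    L p = L (p.1, 0) + p.2 * L (0, 1) := by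
  have h1 : p = (p.1, 0) + p.2 • ((0 : ℝ), (1 : ℝ)) := by ext <;> simp
  conv_lhs => rw [h1]
  rw [map_add L, _root_.map_smul L, smul_eq_mul]

/-- The explicit linear equivalence of `ℝ²` given by `(a, b) ↦ (a, L (a, b))` when
the partial derivative `L (0, 1)` is nonzero. -/
noncomputable def twoEquiv (L : ℝ × ℝ →L[ℝ] ℝ) (hL : L (0, 1) ≠ 0) :
    (ℝ × ℝ) ≃L[ℝ] (ℝ × ℝ) :=
  LinearEquiv.toContinuousLinearEquiv
  { toFun := fun q => (q.1, L q)
    map_add' := fun x y => by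
      ext
      · rfl
      · exact map_add L x y
    map_smul' := fun c x => by
      ext
      · rfl
      · exact map_smul L c x
    invFun := fun q => (q.1, (q.2 - L (q.1, 0)) / L (0, 1))
    left_inv := fun q => by
      ext
      · rfl
      · show (L q - L (q.1, 0)) / L (0, 1) = q.2
        rw [L_decomp L q, add_sub_cancel_left, mul_div_assoc, div_self hL, mul_one]
    right_inv := fun q => by
      ext
      · rfl
      · show L (q.1, (q.2 - L (q.1, 0)) / L (0, 1)) = q.2
        rw [L_decomp L (q.1, (q.2 - L (q.1, 0)) / L (0, 1))]
        show L (q.1, 0) + (q.2 - L (q.1, 0)) / L (0, 1) * L (0, 1) = q.2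
        rw [div_mul_cancel₀ _ hL]
        ring }

lemma twoEquiv_coe (L : ℝ × ℝ →L[ℝ] ℝ) (hL : L (0, 1) ≠ 0) :
    (twoEquiv L hL : (ℝ × ℝ) →L[ℝ] (ℝ × ℝ)) = (ContinuousLinearMap.fst ℝ ℝ ℝ).prod L := by
  apply ContinuousLinearMap.ext
  intro q
  rfl

lemma twoEquiv_symm_apply (L : ℝ × ℝ →L[ℝ] ℝ) (hL : L (0, 1) ≠ 0) (q : ℝ × ℝ) :
    (twoEquiv L hL).symm q = (q.1, (q.2 - L (q.1, 0)) / L (0, 1)) := rfl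

lemma contDiff_P2 {N : ℕ} (A B : Matrix (Fin N) (Fin N) ℂ) :
    ContDiff ℝ 2 (fun q : ℝ × ℝ => ((A + q.1 • B - (q.2 : ℂ) • 1).det).re) := by
  classical
  have hdet : ContDiff ℝ 2 (fun q : ℝ × ℝ => (A + q.1 • B - (q.2 : ℂ) • 1).det) := by
    have h1 : (fun q : ℝ × ℝ => (A + q.1 • B - (q.2 : ℂ) • 1).det)
        = fun q : ℝ × ℝ => ∑ σ : Equiv.Perm (Fin N), ((Equiv.Perm.sign σ : ℤ) : ℂ) *
            ∏ i, (A (σ i) i + q.1 • B (σ i) i - (q.2 : ℂ) * (if σ i = i then 1 else 0)) := by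
      funext q
      rw [Matrix.det_apply']
      refine Finset.sum_congr rfl fun σ _ => ?_
      congr 1
    rw [h1]
    apply ContDiff.sum
    intro σ _
    apply ContDiff.mul contDiff_const
    refine contDiff_prod fun i _ => ?_
    exact (contDiff_const.add (contDiff_fst.smul contDiff_const)).sub
      ((Complex.ofRealCLM.contDiff.comp contDiff_snd).mul contDiff_const)
  exact Complex.reCLM.contDiff.comp hdet

lemma exists_phi {N : ℕ} {A B : Matrix (Fin N) (Fin N) ℂ} (hA : A.IsHermitian)
    (hinj : Function.Injective hA.eigenvalues) (s0 : Fin N) :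
    ∃ φ : ℝ → ℝ, φ 0 = hA.eigenvalues s0 ∧
      HasDerivAt φ (((eigsProj hA s0 * B).trace).re) 0 ∧
      (∀ᶠ t in nhds (0 : ℝ), ((A + t • B - (φ t : ℂ) • 1).det).re = 0) := by
  classical
  set μ : ℝ := hA.eigenvalues s0 with hμ
  set P2 : ℝ × ℝ → ℝ := fun q => ((A + q.1 • B - (q.2 : ℂ) • 1).det).re with hP2def
  have hsmooth : ContDiff ℝ 2 P2 := contDiff_P2 A B
  set creal : ℝ := ∏ s ∈ Finset.univ.erase s0, (hA.eigenvalues s - μ) with hcreal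
  have hc0 : creal ≠ 0 := by
    rw [hcreal]
    refine Finset.prod_ne_zero_iff.2 fun s hs => ?_
    have hne : s ≠ s0 := (Finset.mem_erase.1 hs).1
    exact sub_ne_zero.2 fun hcon => hne (hinj hcon)
  set d : ℝ := ((eigsProj hA s0 * B).trace).re with hd
  -- the partial derivative in `x`
  have hPx : ∀ x : ℝ, P2 (0, x) = ∏ s, (hA.eigenvalues s - x) := by
    intro x
    have : A + (0 : ℝ) • B - (x : ℂ) • 1 = A - (x : ℂ) • 1 := by
      rw [zero_smul, add_zero]
    rw [hP2def]
    dsimp only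
    rw [this, re_det_sub_smul_one hA x]
  have hpx : HasDerivAt (fun x => P2 (0, x)) (-creal) μ := by
    have hprod : HasDerivAt (fun x : ℝ => ∏ s, (hA.eigenvalues s - x))
        (∑ s, (∏ j ∈ Finset.univ.erase s, (hA.eigenvalues j - μ)) • (-1 : ℝ)) μ :=
      HasDerivAt.fun_finsetProd fun s _ => (hasDerivAt_id μ).const_sub (hA.eigenvalues s)
    have hval : (∑ s, (∏ j ∈ Finset.univ.erase s, (hA.eigenvalues j - μ)) • (-1 : ℝ))
        = -creal := by
      rw [Finset.sum_eq_single s0]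
      · rw [hcreal]; simp
      · intro s _ hs
        have hmem : s0 ∈ Finset.univ.erase s := Finset.mem_erase.2 ⟨Ne.symm hs, Finset.mem_univ _⟩
        rw [Finset.prod_eq_zero hmem (by rw [hμ]; exact sub_self _), zero_smul]
      · intro h; exact absurd (Finset.mem_univ s0) h
    rw [← hval]
    refine HasDerivAt.congr_of_eventuallyEq hprod ?_
    exact Filter.Eventually.of_forall fun x => hPx x
  -- the partial derivative in `t`
  have hpt : HasDerivAt (fun t => P2 (t, μ)) (creal * d) 0 := by
    set M : Matrix (Fin N) (Fin N) ℂ := A - (μ : ℂ) • 1 with hM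
    have hfun : (fun t => P2 (t, μ)) = fun t : ℝ => ((M + t • B).det).re := by
      funext t
      rw [hP2def]
      dsimp only
      rw [hM, add_sub_right_comm]
    have hdet := hasDerivAt_det_line M B
    have hre : HasDerivAt (fun t : ℝ => ((M + t • B).det).re)
        (((M.adjugate * B).trace).re) 0 :=
      Complex.reCLM.hasFDerivAt.comp_hasDerivAt 0 hdet
    have hadj : (M.adjugate * B).trace =
        ((creal : ℂ)) * ((eigsProj hA s0 * B).trace) := by
      rw [hM, adjugate_sub_smul_one hA s0, Matrix.smul_mul, Matrix.trace_smul, smul_eq_mul]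
      congr 1
      rw [hcreal]
      push_cast
      rfl
    rw [hfun]
    have : ((M.adjugate * B).trace).re = creal * d := by
      rw [hadj, hd]
      simp [Complex.mul_re]
    rw [← this]
    exact hre
  -- identify the full derivative
  have hstrict : HasStrictFDerivAt P2 (fderiv ℝ P2 (0, μ)) (0, μ) :=
    (hsmooth.contDiffAt).hasStrictFDerivAt (by norm_num)
  set L : ℝ × ℝ →L[ℝ] ℝ := fderiv ℝ P2 (0, μ) with hL
  have hL10 : L (1, 0) = creal * d := by
    have hcurve : HasDerivAt (fun t : ℝ => (t, μ)) ((1 : ℝ), (0 : ℝ)) 0 :=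
      (hasDerivAt_id 0).prodMk (hasDerivAt_const 0 μ)
    have h1 : HasDerivAt (fun t => P2 (t, μ)) (L (1, 0)) 0 :=
      by have hl := hstrict.hasFDerivAt; exact hl.comp_hasDerivAt (0 : ℝ) hcurve
    exact h1.unique hpt
  have hL01 : L (0, 1) = -creal := by
    have hcurve : HasDerivAt (fun x : ℝ => ((0 : ℝ), x)) ((0 : ℝ), (1 : ℝ)) μ :=
      (hasDerivAt_const μ 0).prodMk (hasDerivAt_id μ)
    have h1 : HasDerivAt (fun x => P2 (0, x)) (L (0, 1)) μ :=
      hstrict.hasFDerivAt.comp_hasDerivAt μ hcurve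
    exact h1.unique hpx
  have hLne : L (0, 1) ≠ 0 := by rw [hL01]; exact neg_ne_zero.2 hc0
  -- the local inverse
  set f2 : ℝ × ℝ → ℝ × ℝ := fun q => (q.1, P2 q) with hf2def
  have hf2 : HasStrictFDerivAt f2 ((twoEquiv L hLne : (ℝ × ℝ) ≃L[ℝ] (ℝ × ℝ)) :
      (ℝ × ℝ) →L[ℝ] (ℝ × ℝ)) (0, μ) := by
    rw [twoEquiv_coe]
    exact hasStrictFDerivAt_fst.prodMk hstrict
  have him : f2 (0, μ) = ((0 : ℝ), (0 : ℝ)) := by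
    show ((0 : ℝ), P2 (0, μ)) = ((0 : ℝ), (0 : ℝ))
    rw [hPx μ, Finset.prod_eq_zero (Finset.mem_univ s0) (by rw [hμ]; exact sub_self _)]
  set g : ℝ × ℝ → ℝ × ℝ := hf2.localInverse f2 _ _ with hg
  refine ⟨fun t => (g (t, 0)).2, ?_, ?_, ?_⟩
  · have h0 := hf2.localInverse_apply_image
    rw [him] at h0
    rw [← hg] at h0
    show (g (0, 0)).2 = μ
    rw [h0]
  · have hder := hf2.to_localInverse
    rw [him] at hder
    rw [← hg] at hder
    have hcurve : HasDerivAt (fun t : ℝ => (t, (0 : ℝ))) ((1 : ℝ), (0 : ℝ)) 0 :=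
      (hasDerivAt_id 0).prodMk (hasDerivAt_const 0 0)
    have h1 : HasDerivAt (fun t : ℝ => g (t, 0)) ((twoEquiv L hLne).symm (1, 0)) 0 :=
      hder.hasFDerivAt.comp_hasDerivAt (f := fun t : ℝ => (t, (0 : ℝ))) 0 hcurve
    have h2 : HasDerivAt (fun t : ℝ => (g (t, 0)).2)
        (((twoEquiv L hLne).symm ((1 : ℝ), (0 : ℝ))).2) 0 :=
      (ContinuousLinearMap.snd ℝ ℝ ℝ).hasFDerivAt.comp_hasDerivAt 0 h1
    have hval : (((twoEquiv L hLne).symm ((1 : ℝ), (0 : ℝ))).2) = d := by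
      rw [twoEquiv_symm_apply]
      dsimp only
      rw [hL10, hL01]
      rw [zero_sub, neg_div_neg_eq, mul_comm, mul_div_assoc, div_self hc0, mul_one]
    rw [hval] at h2
    exact h2
  · have hev := hf2.eventually_right_inverse
    rw [him] at hev
    have htend : Filter.Tendsto (fun t : ℝ => (t, (0 : ℝ))) (nhds 0) (nhds ((0 : ℝ), (0 : ℝ))) := by
      have := (continuous_id.prodMk (continuous_const (y := (0 : ℝ)))).continuousAt
        (x := (0 : ℝ))
      exact this
    have hev2 : ∀ᶠ t in nhds (0 : ℝ), f2 (g (t, 0)) = (t, 0) := htend.eventually hev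
    refine hev2.mono fun t ht => ?_
    have hfst : (g (t, 0)).1 = t := congrArg Prod.fst ht
    have hsnd : P2 (g (t, 0)) = 0 := congrArg Prod.snd ht
    have hgt : g (t, 0) = (t, (g (t, 0)).2) := by
      ext
      · exact hfst
      · rfl
    rw [hgt] at hsnd
    exact hsnd

end Part6

section Part7

lemma isHermitian_add_smul {N : ℕ} {A B : Matrix (Fin N) (Fin N) ℂ}
    (hA : A.IsHermitian) (hB : B.IsHermitian) (t : ℝ) : (A + t • B).IsHermitian := by
  unfold Matrix.IsHermitian at *
  rw [Matrix.conjTranspose_add]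
  congr 1
  ext a b
  rw [Matrix.conjTranspose_apply, Matrix.smul_apply, Matrix.smul_apply, star_smul]
  rw [← Matrix.conjTranspose_apply, hB]
  simp

lemma eigsDesc_congr {N : ℕ} {A1 A2 : Matrix (Fin N) (Fin N) ℂ} (h : A1 = A2)
    (h1 : A1.IsHermitian) (h2 : A2.IsHermitian) (r : Fin N) :
    eigsDesc h1 r = eigsDesc h2 r := by subst h; rfl

lemma hasDerivAt_eigsDescH {N : ℕ} {A B : Matrix (Fin N) (Fin N) ℂ}
    (hA : A.IsHermitian) (hB : B.IsHermitian)
    (hinj : Function.Injective hA.eigenvalues) (r : Fin N) :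
    HasDerivAt (fun t : ℝ => eigsDescH (A + t • B) r)
      (((eigsProj hA (Tuple.sort hA.eigenvalues r.rev) * B).trace).re) 0 := by
  classical
  choose φ hφ0 hder hroot using fun q : Fin N =>
    exists_phi (B := B) hA hinj (Tuple.sort hA.eigenvalues q)
  have hAt : ∀ t : ℝ, (A + t • B).IsHermitian := fun t => isHermitian_add_smul hA hB t
  have hμmono : StrictMono (fun q : Fin N => hA.eigenvalues (Tuple.sort hA.eigenvalues q)) := by
    have h1 : Monotone (hA.eigenvalues ∘ ⇑(Tuple.sort hA.eigenvalues)) :=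
      Tuple.monotone_sort hA.eigenvalues
    have h2 : Function.Injective (hA.eigenvalues ∘ ⇑(Tuple.sort hA.eigenvalues)) :=
      hinj.comp (Equiv.injective _)
    exact h1.strictMono_of_injective h2
  have hmono_ev : ∀ᶠ t in nhds (0 : ℝ), ∀ p : Fin N × Fin N,
      p.1 < p.2 → φ p.1 t < φ p.2 t := by
    rw [Filter.eventually_all]
    intro p
    by_cases hp : p.1 < p.2
    · have hlt : φ p.1 0 < φ p.2 0 := by rw [hφ0, hφ0]; exact hμmono hp
      exact ((hder p.1).continuousAt.eventually_lt (hder p.2).continuousAt hlt).mono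
        (fun t ht _ => ht)
    · exact Filter.Eventually.of_forall fun t hc => absurd hc hp
  have hroot_ev : ∀ᶠ t in nhds (0 : ℝ), ∀ q : Fin N,
      ((A + t • B - (φ q t : ℂ) • 1).det).re = 0 := by
    rw [Filter.eventually_all]
    exact hroot
  have heq : (fun t : ℝ => eigsDescH (A + t • B) r) =ᶠ[nhds 0] fun t => φ r.rev t := by
    filter_upwards [hmono_ev, hroot_ev] with t hm hr
    have hsm : StrictMono (fun q => φ q t) := fun a b hab => hm (a, b) hab
    have hre : ∀ q : Fin N, ∃ s, (hAt t).eigenvalues s = φ q t := by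
      intro q
      have h0 := hr q
      rw [re_det_sub_smul_one (hAt t) (φ q t)] at h0
      obtain ⟨s, _, hs⟩ := Finset.prod_eq_zero_iff.1 h0
      exact ⟨s, sub_eq_zero.1 hs⟩
    rw [eigsDescH_of_isHermitian (hAt t) r,
      eigsDesc_eq_of_strictMono (hAt t) hsm hre r]
  rw [Filter.EventuallyEq.hasDerivAt_iff heq]
  exact hder r.rev

end Part7

section Part8

lemma padM_sub {n k : ℕ} (h : k ≤ n) (P Q : Matrix (Fin k) (Fin k) ℂ) :
    padM k h P - padM k h Q = padM k h (P - Q) := by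
  ext a b
  simp only [Matrix.sub_apply, padM, Matrix.of_apply]
  split_ifs <;> simp

lemma isHermitian_sum {N : ℕ} {ι : Type*} (s : Finset ι) (f : ι → Matrix (Fin N) (Fin N) ℂ)
    (hf : ∀ r ∈ s, (f r).IsHermitian) : (∑ r ∈ s, f r).IsHermitian := by
  unfold Matrix.IsHermitian
  rw [Matrix.conjTranspose_sum]
  exact Finset.sum_congr rfl hf

/-- The explicit gradient of the Gelfand–Zeitlin function `lki k i` at `K`. -/
noncomputable def lkiGrad {n : ℕ} {K : Matrix (Fin n) (Fin n) ℂ} (hK : K.IsHermitian)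
    (k i : ℕ) (hi1 : 1 ≤ i) (hik : i ≤ k) (hkn : k ≤ n) : Matrix (Fin n) (Fin n) ℂ :=
  padM k hkn (∑ r ∈ Finset.Iic (⟨i - 1, by omega⟩ : Fin k),
    eigsProj (hK.submatrix (Fin.castLE hkn))
      (Tuple.sort (hK.submatrix (Fin.castLE hkn)).eigenvalues r.rev))

lemma lki_gradient {n : ℕ} {K : Matrix (Fin n) (Fin n) ℂ} (hK : K.IsHermitian)
    (k i : ℕ) (hi1 : 1 ≤ i) (hik : i ≤ k) (hkn : k ≤ n)
    (hinj : Function.Injective (hK.submatrix (Fin.castLE hkn)).eigenvalues) :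
    IsHermGradientAt (lki k i) K (lkiGrad hK k i hi1 hik hkn) := by
  classical
  set hA : ((K.submatrix (Fin.castLE hkn) (Fin.castLE hkn)).IsHermitian) :=
    hK.submatrix (Fin.castLE hkn) with hAdef
  set A : Matrix (Fin k) (Fin k) ℂ := K.submatrix (Fin.castLE hkn) (Fin.castLE hkn) with hAset
  set I : Finset (Fin k) := Finset.Iic (⟨i - 1, by omega⟩ : Fin k) with hI
  set Pm : Matrix (Fin k) (Fin k) ℂ :=
    ∑ r ∈ I, eigsProj hA (Tuple.sort hA.eigenvalues r.rev) with hPm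
  constructor
  · exact padM_isHermitian hkn
      (isHermitian_sum I _ fun r _ => eigsProj_isHermitian hA _)
  · intro X hX
    set B : Matrix (Fin k) (Fin k) ℂ := X.submatrix (Fin.castLE hkn) (Fin.castLE hkn) with hBset
    have hBh : B.IsHermitian := hX.submatrix (Fin.castLE hkn)
    have hsubm : ∀ t : ℝ, (K + t • X).submatrix (Fin.castLE hkn) (Fin.castLE hkn)
        = A + t • B := by
      intro t
      ext a b
      simp [Matrix.submatrix_apply, Matrix.add_apply, Matrix.smul_apply, hAset, hBset]
    have hcond : 1 ≤ i ∧ i ≤ k ∧ k ≤ n := ⟨hi1, hik, hkn⟩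
    have hpath : ∀ t : ℝ, lki k i (K + t • X) = ∑ r ∈ I, eigsDescH (A + t • B) r := by
      intro t
      have hX' : (((K + t • X)).submatrix (Fin.castLE hkn) (Fin.castLE hkn)).IsHermitian := by
        rw [hsubm t]
        exact isHermitian_add_smul hA hBh t
      rw [lki, dif_pos hcond, dif_pos hX', lMap]
      refine Finset.sum_congr rfl fun r _ => ?_
      rw [eigsDescH_of_isHermitian (by rw [← hsubm t]; exact hX') r]
      exact eigsDesc_congr (hsubm t) _ _ r
    have hfun : (fun t : ℝ => lki k i (K + t • X)) = fun t => ∑ r ∈ I,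
        eigsDescH (A + t • B) r := funext hpath
    rw [hfun]
    have hsum := HasDerivAt.fun_sum (u := I)
      (A := fun r t => eigsDescH (A + t • B) r)
      (A' := fun r => (((eigsProj hA (Tuple.sort hA.eigenvalues r.rev) * B).trace).re))
      (fun r _ => hasDerivAt_eigsDescH hA hBh hinj r)
    have hval : ((lkiGrad hK k i hi1 hik hkn * X).trace).re
        = ∑ r ∈ I, (((eigsProj hA (Tuple.sort hA.eigenvalues r.rev) * B).trace).re) := by
      have h1 : (lkiGrad hK k i hi1 hik hkn * X).trace = (Pm * B).trace := by
        rw [lkiGrad]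
        exact trace_padM_mul hkn Pm X
      rw [h1, hPm, Matrix.sum_mul, Matrix.trace_sum, Complex.re_sum]
    rw [hval]
    exact hsum

lemma bracket_aux {n k m : ℕ} (hkm : k ≤ m) (hmn : m ≤ n) (hkn : k ≤ n)
    (K : Matrix (Fin n) (Fin n) ℂ)
    (P : Matrix (Fin k) (Fin k) ℂ) (Q : Matrix (Fin m) (Fin m) ℂ)
    (hQ : Q * K.submatrix (Fin.castLE hmn) (Fin.castLE hmn)
        = K.submatrix (Fin.castLE hmn) (Fin.castLE hmn) * Q) :
    (K * (padM k hkn P * padM m hmn Q - padM m hmn Q * padM k hkn P)).trace = 0 := by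
  classical
  set C : Matrix (Fin m) (Fin m) ℂ := K.submatrix (Fin.castLE hmn) (Fin.castLE hmn) with hC
  set P' : Matrix (Fin m) (Fin m) ℂ := padM k hkm P with hP'
  have hpad : padM k hkn P = padM m hmn P' := by
    rw [hP', padM_padM hkm hmn P]
  rw [hpad, padM_mul_padM, padM_mul_padM, padM_sub]
  rw [Matrix.trace_mul_comm, trace_padM_mul hmn _ K, ← hC]
  have h1 : ((P' * Q - Q * P') * C).trace
      = (P' * (Q * C)).trace - (P' * (C * Q)).trace := by
    rw [Matrix.sub_mul, Matrix.trace_sub, Matrix.mul_assoc]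
    congr 1
    rw [Matrix.mul_assoc, Matrix.trace_mul_comm Q (P' * C), Matrix.mul_assoc]
  rw [h1, hQ, sub_self]

lemma lkiGrad_block_commutes {n : ℕ} {K : Matrix (Fin n) (Fin n) ℂ} (hK : K.IsHermitian)
    (m j : ℕ) (hj1 : 1 ≤ j) (hjm : j ≤ m) (hmn : m ≤ n) :
    (∑ r ∈ Finset.Iic (⟨j - 1, by omega⟩ : Fin m),
        eigsProj (hK.submatrix (Fin.castLE hmn))
          (Tuple.sort (hK.submatrix (Fin.castLE hmn)).eigenvalues r.rev)) *
      K.submatrix (Fin.castLE hmn) (Fin.castLE hmn)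
    = K.submatrix (Fin.castLE hmn) (Fin.castLE hmn) *
      (∑ r ∈ Finset.Iic (⟨j - 1, by omega⟩ : Fin m),
        eigsProj (hK.submatrix (Fin.castLE hmn))
          (Tuple.sort (hK.submatrix (Fin.castLE hmn)).eigenvalues r.rev)) := by
  rw [Matrix.sum_mul, Matrix.mul_sum]
  refine Finset.sum_congr rfl fun r _ => ?_
  exact (eigsProj_commute (hK.submatrix (Fin.castLE hmn)) _).symm

end Part8

/-- Guillemin–Sternberg: at a Hermitian matrix `K` all of whose principal submatrices
have distinct eigenvalues, the Gelfand–Zeitlin functions `lᵏᵢ` and `lᵐⱼ` are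
differentiable (they admit gradients in the sense of `IsHermGradientAt`), and their
Kirillov–Kostant–Souriau Poisson bracket `Im Tr(K·[∇f(K), ∇g(K)])` vanishes at `K`. -/
theorem gelfandZeitlin_poisson_commute (n : ℕ) (hn : 0 < n)
    {K : Matrix (Fin n) (Fin n) ℂ} (hK : K.IsHermitian)
    (hdistinct : ∀ (k : ℕ) (hk : k ≤ n), 1 ≤ k →
      Function.Injective (hK.submatrix (Fin.castLE hk)).eigenvalues)
    (k i m j : ℕ) (hi1 : 1 ≤ i) (hik : i ≤ k) (hkn : k ≤ n)
    (hj1 : 1 ≤ j) (hjm : j ≤ m) (hmn : m ≤ n) :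
    (∃ G, IsHermGradientAt (lki k i) K G) ∧
    (∃ G, IsHermGradientAt (lki m j) K G) ∧
    (∀ Gf Gg : Matrix (Fin n) (Fin n) ℂ,
      IsHermGradientAt (lki k i) K Gf → IsHermGradientAt (lki m j) K Gg →
      ((K * (Gf * Gg - Gg * Gf)).trace).im = 0) := by
  classical
  have hinjk : Function.Injective (hK.submatrix (Fin.castLE hkn)).eigenvalues :=
    hdistinct k hkn (hi1.trans hik)
  have hinjm : Function.Injective (hK.submatrix (Fin.castLE hmn)).eigenvalues :=
    hdistinct m hmn (hj1.trans hjm)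
  have hgf := lki_gradient hK k i hi1 hik hkn hinjk
  have hgg := lki_gradient hK m j hj1 hjm hmn hinjm
  refine ⟨⟨_, hgf⟩, ⟨_, hgg⟩, ?_⟩
  intro Gf Gg hf hg
  have hGf : Gf = lkiGrad hK k i hi1 hik hkn := hermGradientAt_unique hf hgf
  have hGg : Gg = lkiGrad hK m j hj1 hjm hmn := hermGradientAt_unique hg hgg
  subst hGf
  subst hGg
  rcases le_total k m with hkm | hmk
  · have h0 := bracket_aux hkm hmn hkn K
      (∑ r ∈ Finset.Iic (⟨i - 1, by omega⟩ : Fin k),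
        eigsProj (hK.submatrix (Fin.castLE hkn))
          (Tuple.sort (hK.submatrix (Fin.castLE hkn)).eigenvalues r.rev))
      (∑ r ∈ Finset.Iic (⟨j - 1, by omega⟩ : Fin m),
        eigsProj (hK.submatrix (Fin.castLE hmn))
          (Tuple.sort (hK.submatrix (Fin.castLE hmn)).eigenvalues r.rev))
      (lkiGrad_block_commutes hK m j hj1 hjm hmn)
    have h2 : (K * (lkiGrad hK k i hi1 hik hkn * lkiGrad hK m j hj1 hjm hmn
        - lkiGrad hK m j hj1 hjm hmn * lkiGrad hK k i hi1 hik hkn)).trace = 0 := h0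
    rw [h2, Complex.zero_im]
  · have h0 := bracket_aux hmk hkn hmn K
      (∑ r ∈ Finset.Iic (⟨j - 1, by omega⟩ : Fin m),
        eigsProj (hK.submatrix (Fin.castLE hmn))
          (Tuple.sort (hK.submatrix (Fin.castLE hmn)).eigenvalues r.rev))
      (∑ r ∈ Finset.Iic (⟨i - 1, by omega⟩ : Fin k),
        eigsProj (hK.submatrix (Fin.castLE hkn))
          (Tuple.sort (hK.submatrix (Fin.castLE hkn)).eigenvalues r.rev))
      (lkiGrad_block_commutes hK k i hi1 hik hkn)
    have h2 : (K * (lkiGrad hK m j hj1 hjm hmn * lkiGrad hK k i hi1 hik hkn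
        - lkiGrad hK k i hi1 hik hkn * lkiGrad hK m j hj1 hjm hmn)).trace = 0 := h0
    have h1 : (K * (lkiGrad hK k i hi1 hik hkn * lkiGrad hK m j hj1 hjm hmn
        - lkiGrad hK m j hj1 hjm hmn * lkiGrad hK k i hi1 hik hkn)).trace
        = -(K * (lkiGrad hK m j hj1 hjm hmn * lkiGrad hK k i hi1 hik hkn
        - lkiGrad hK k i hi1 hik hkn * lkiGrad hK m j hj1 hjm hmn)).trace := by
      rw [show lkiGrad hK k i hi1 hik hkn * lkiGrad hK m j hj1 hjm hmn
          - lkiGrad hK m j hj1 hjm hmn * lkiGrad hK k i hi1 hik hkn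
          = -(lkiGrad hK m j hj1 hjm hmn * lkiGrad hK k i hi1 hik hkn
          - lkiGrad hK k i hi1 hik hkn * lkiGrad hK m j hj1 hjm hmn) from
        (neg_sub _ _).symm, Matrix.mul_neg, Matrix.trace_neg]
    rw [h1, h2, neg_zero, Complex.zero_im]
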